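/- Set A_m = a_m a_m* and Ã_m = A_m − (1/3)·I₂ for m = 1,…,4. Then for every x ∈ ℂ², the rank-one matrix Q = xx* satisfies the dual reconstruction formula Q = (3/2)·Σ_{m=1}^{4} ⟨Q, Ã_m⟩·A_m, where ⟨X,Y⟩ = trace(Y*X) is the Hilbert–Schmidt inner product of matrices. -/
import Mathlib


open Complex Matrix MeasureTheory

noncomputable section

/-- α = √((1 − 1/√3)/2) -/
def alph : ℂ := (Real.sqrt ((1 - 1/Real.sqrt 3)/2) : ℝ)

/-- β = e^{i5π/4}·√((1 + 1/√3)/2) -/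
def beta : ℂ := Complex.exp (Complex.I * (5 * (Real.pi : ℂ) / 4)) *
  (Real.sqrt ((1 + 1/Real.sqrt 3)/2) : ℝ)

/-- the four frame vectors a₁ = (α,β), a₂ = (β,α), a₃ = (α,−β), a₄ = (−β,α) in ℂ² -/
def coef : Fin 4 → Fin 2 → ℂ := ![![alph, beta], ![beta, alph], ![alph, -beta], ![-beta, alph]]

/-- inner product ⟨x,y⟩ = Σ x[n]·conj(y[n]) -/
def inn {N : ℕ} (x y : Fin N → ℂ) : ℂ := ∑ i, x i * (starRingEnd ℂ) (y i)

/-- Euclidean norm ‖x‖ = √⟨x,x⟩ -/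
def nrm {N : ℕ} (x : Fin N → ℂ) : ℝ := Real.sqrt (inn x x).re

/-- outer product x y* -/
def outer {N : ℕ} (x y : Fin N → ℂ) : Matrix (Fin N) (Fin N) ℂ :=
  fun i j => x i * (starRingEnd ℂ) (y j)

/-- measurement vectors φ_{m,n} (0-based n: nonzero entries at positions n and n+1) -/
def phiv (N : ℕ) (m : Fin 4) (n : ℕ) : Fin N → ℂ :=
  fun i => if (i : ℕ) = n then coef m 0 else if (i : ℕ) = n + 1 then coef m 1 else 0

/-- measurement vectors ψ_{m,n} (0-based n: nonzero entries at positions 0 and n+1) -/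
def psiv (N : ℕ) (m : Fin 4) (n : ℕ) : Fin N → ℂ :=
  fun i => if (i : ℕ) = 0 then coef m 0 else if (i : ℕ) = n + 1 then coef m 1 else 0

/-- Hilbert–Schmidt inner product ⟨X,Y⟩ = trace(Y*X) -/
def hs {N : ℕ} (X Y : Matrix (Fin N) (Fin N) ℂ) : ℂ := Matrix.trace (Yᴴ * X)

/-- Frobenius (Hilbert–Schmidt) norm -/
def frob {N : ℕ} (X : Matrix (Fin N) (Fin N) ℂ) : ℝ := Real.sqrt (Matrix.trace (Xᴴ * X)).re

/-- spectral norm (largest singular value) -/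
def specNorm {N : ℕ} (A : Matrix (Fin N) (Fin N) ℂ) : ℝ :=
  sSup {r : ℝ | ∃ v : Fin N → ℂ, nrm v ≤ 1 ∧ r = nrm (A.mulVec v)}

lemma sqrt3_pos : (0:ℝ) < Real.sqrt 3 := Real.sqrt_pos.mpr (by norm_num)
lemma sqrt3_sq : (Real.sqrt 3)^2 = 3 := Real.sq_sqrt (by norm_num)
lemma sqrt3_ge_one : (1:ℝ) ≤ Real.sqrt 3 := by
  nlinarith [sqrt3_sq, sqrt3_pos]

lemma argA_nonneg : (0:ℝ) ≤ (1 - 1/Real.sqrt 3)/2 := by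
  have h1 : 1/Real.sqrt 3 ≤ 1 := by
    rw [div_le_one sqrt3_pos]; exact sqrt3_ge_one
  linarith
lemma argB_nonneg : (0:ℝ) ≤ (1 + 1/Real.sqrt 3)/2 := by
  positivity

lemma conj_alph : (starRingEnd ℂ) alph = alph := Complex.conj_ofReal _

lemma alph_sq : alph^2 = (((1 - 1/Real.sqrt 3)/2 : ℝ) : ℂ) := by
  rw [alph, ← Complex.ofReal_pow, Real.sq_sqrt argA_nonneg]

lemma beta_mul_conj : beta * (starRingEnd ℂ) beta = (((1 + 1/Real.sqrt 3)/2 : ℝ) : ℂ) := by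
  rw [beta]
  rw [_root_.map_mul, Complex.conj_ofReal, ← Complex.exp_conj]
  have hc : (starRingEnd ℂ) (Complex.I * (5 * (Real.pi : ℂ) / 4))
      = -(Complex.I * (5 * (Real.pi : ℂ) / 4)) := by
    simp [_root_.map_mul, map_div₀, Complex.conj_I, Complex.conj_ofReal, map_ofNat]
  rw [hc]
  have : Complex.exp (Complex.I * (5 * (Real.pi : ℂ) / 4)) *
      (((Real.sqrt ((1 + 1/Real.sqrt 3)/2)):ℂ)) *
      (Complex.exp (-(Complex.I * (5 * (Real.pi : ℂ) / 4))) *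
      ((Real.sqrt ((1 + 1/Real.sqrt 3)/2)):ℂ)) =
      (Complex.exp (Complex.I * (5 * (Real.pi : ℂ) / 4)) *
       Complex.exp (-(Complex.I * (5 * (Real.pi : ℂ) / 4)))) *
      (((Real.sqrt ((1 + 1/Real.sqrt 3)/2)):ℂ))^2 := by ring
  rw [this, ← Complex.exp_add, add_neg_cancel, Complex.exp_zero, one_mul,
    ← Complex.ofReal_pow, Real.sq_sqrt argB_nonneg]

lemma exp_sq : (Complex.exp (Complex.I * (5 * (Real.pi : ℂ) / 4)))^2 = Complex.I := by
  rw [sq, ← Complex.exp_add]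
  have h : Complex.I * (5 * (Real.pi : ℂ) / 4) + Complex.I * (5 * (Real.pi : ℂ) / 4)
      = 2 * (Real.pi : ℂ) * Complex.I + (Real.pi : ℂ)/2 * Complex.I := by ring
  rw [h, Complex.exp_add, Complex.exp_two_pi_mul_I, one_mul, Complex.exp_mul_I,
    Complex.cos_pi_div_two, Complex.sin_pi_div_two]
  ring

lemma beta_sq : beta^2 = Complex.I * (beta * (starRingEnd ℂ) beta) := by
  rw [beta_mul_conj, beta, mul_pow, exp_sq, ← Complex.ofReal_pow, Real.sq_sqrt argB_nonneg]

lemma conj_beta_sq : ((starRingEnd ℂ) beta)^2 = -Complex.I * (beta * (starRingEnd ℂ) beta) := by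
  have := congrArg (starRingEnd ℂ) beta_sq
  rw [map_pow, _root_.map_mul, Complex.conj_I, _root_.map_mul, Complex.conj_conj] at this
  rw [this]; ring

lemma alph_h1 : alph^2 = 1 - beta * (starRingEnd ℂ) beta := by
  rw [alph_sq, beta_mul_conj]
  push_cast
  ring

lemma h5fact : (beta * (starRingEnd ℂ) beta)^2 = beta * (starRingEnd ℂ) beta - 1/6 := by
  rw [beta_mul_conj, ← Complex.ofReal_pow]
  have : ((1 + 1/Real.sqrt 3)/2)^2 = (1 + 1/Real.sqrt 3)/2 - 1/6 := by
    have h0 := sqrt3_pos.ne'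
    field_simp
    nlinarith [sqrt3_sq]
  rw [this]; push_cast; ring

lemma aux_recon (a b : ℂ) (ha : (starRingEnd ℂ) a = a)
    (h1 : a^2 = 1 - b * (starRingEnd ℂ) b)
    (h3 : b^2 = Complex.I * (b * (starRingEnd ℂ) b))
    (h4 : ((starRingEnd ℂ) b)^2 = -Complex.I * (b * (starRingEnd ℂ) b))
    (h5 : (b * (starRingEnd ℂ) b)^2 = b * (starRingEnd ℂ) b - 1/6)
    (x : Fin 2 → ℂ) (cf : Fin 4 → Fin 2 → ℂ)
    (hcf : cf = ![![a, b], ![b, a], ![a, -b], ![-b, a]]) :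
    outer x x = (3/2 : ℂ) • ∑ m : Fin 4,
      hs (outer x x) (outer (cf m) (cf m) - (1/3 : ℂ) • (1 : Matrix (Fin 2) (Fin 2) ℂ)) •
        outer (cf m) (cf m) := by
  subst hcf
  funext i j
  fin_cases i <;> fin_cases j <;>
    simp [hs, outer, Matrix.trace, Matrix.mul_apply, Fin.sum_univ_four, Fin.sum_univ_two,
      Matrix.one_apply, ha]
  · linear_combination ((1:ℂ)*(x 1)*((starRingEnd ℂ) (x 1)) + (-2)*(x 0)*((starRingEnd ℂ) (x 0))
      + (-6)*(b*(starRingEnd ℂ) b)*(x 1)*((starRingEnd ℂ) (x 1))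
      + (3)*(b*(starRingEnd ℂ) b)*(x 0)*((starRingEnd ℂ) (x 0))
      + (-3)*a^2*(x 0)*((starRingEnd ℂ) (x 0))) * h1
      + ((6:ℂ)*(x 1)*((starRingEnd ℂ) (x 1)) + (-6)*(x 0)*((starRingEnd ℂ) (x 0))) * h5
  · linear_combination ((-6:ℂ)*(b*(starRingEnd ℂ) b)*(x 0)*((starRingEnd ℂ) (x 1))) * h1
      + ((-3:ℂ)*a^2*(x 1)*((starRingEnd ℂ) (x 0))) * h3
      + ((-3:ℂ)*a^2*(x 1)*((starRingEnd ℂ) (x 0))) * h4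
      + ((6:ℂ)*(x 0)*((starRingEnd ℂ) (x 1))) * h5
  · linear_combination ((-6:ℂ)*(b*(starRingEnd ℂ) b)*(x 1)*((starRingEnd ℂ) (x 0))) * h1
      + ((-3:ℂ)*a^2*(x 0)*((starRingEnd ℂ) (x 1))) * h3
      + ((-3:ℂ)*a^2*(x 0)*((starRingEnd ℂ) (x 1))) * h4
      + ((6:ℂ)*(x 1)*((starRingEnd ℂ) (x 0))) * h5
  · linear_combination ((-2:ℂ)*(x 1)*((starRingEnd ℂ) (x 1)) + (1)*(x 0)*((starRingEnd ℂ) (x 0))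
      + (3)*(b*(starRingEnd ℂ) b)*(x 1)*((starRingEnd ℂ) (x 1))
      + (-6)*(b*(starRingEnd ℂ) b)*(x 0)*((starRingEnd ℂ) (x 0))
      + (-3)*a^2*(x 1)*((starRingEnd ℂ) (x 1))) * h1
      + ((-6:ℂ)*(x 1)*((starRingEnd ℂ) (x 1)) + (6)*(x 0)*((starRingEnd ℂ) (x 0))) * h5

/-- Dual reconstruction formula: Q = (3/2)·Σ_m ⟨Q, Ã_m⟩·A_m for Q = xx*,
where A_m = a_m a_m* and Ã_m = A_m − (1/3)·I₂. -/
theorem rank_one_dual_reconstruction (x : Fin 2 → ℂ) :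
    outer x x = (3/2 : ℂ) • ∑ m : Fin 4,
      hs (outer x x) (outer (coef m) (coef m) - (1/3 : ℂ) • (1 : Matrix (Fin 2) (Fin 2) ℂ)) •
        outer (coef m) (coef m) := by
  exact aux_recon alph beta conj_alph alph_h1 beta_sq conj_beta_sq h5fact x coef rfl
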